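/- Projection characterization of the trace of the positive part: for a Hermitian matrix A : Matrix n n ℂ, (i) for every orthogonal projection P : Matrix n n ℂ (i.e. P Hermitian with P * P = P), Re(Tr(P * A)) ≤ Re(Tr(A₊)); and (ii) there exists an orthogonal projection P with Re(Tr(P * A)) = Re(Tr(A₊)). -/

import Mathlib

open Matrix
open scoped ComplexOrder

/-- The positive part of a matrix, given by the continuous functional calculus
applied to `fun x => max x 0` (for a Hermitian matrix this replaces each
eigenvalue `x` in the spectral decomposition by `max x 0`). -/
noncomputable def matPosPart {n : Type*} [Fintype n] [DecidableEq n]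
    (A : Matrix n n ℂ) : Matrix n n ℂ :=
  cfc (fun x : ℝ => max x 0) A

/-- Projection characterization of the trace of the positive part: the trace of
`A₊` is the maximum of `Re (Tr (P * A))` over orthogonal projections `P`, and
this maximum is attained. -/
lemma proj_diag_entry {n : Type*} [Fintype n] [DecidableEq n]
    (Q : Matrix n n ℂ) (hQ : Q.IsHermitian) (hQ2 : Q * Q = Q) (i : n) :
    (Q i i).im = 0 ∧ 0 ≤ (Q i i).re ∧ (Q i i).re ≤ 1 := by
  have h1 : Q i i = ∑ k, (Complex.normSq (Q i k) : ℂ) := by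
    conv_lhs => rw [← hQ2]
    rw [Matrix.mul_apply]
    refine Finset.sum_congr rfl fun k _ => ?_
    rw [← hQ.apply i k]; simp [Complex.normSq_conj, Complex.normSq_eq_conj_mul_self]
  have him : (Q i i).im = 0 := by
    rw [h1]; simp [Complex.im_sum]
  have hre : (Q i i).re = ∑ k, Complex.normSq (Q i k) := by
    rw [h1]; simp [Complex.re_sum]
  have hge : Complex.normSq (Q i i) ≤ (Q i i).re := by
    rw [hre]
    exact Finset.single_le_sum (f := fun k => Complex.normSq (Q i k))
      (fun k _ => Complex.normSq_nonneg _) (Finset.mem_univ i)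
  have hsq : Complex.normSq (Q i i) = (Q i i).re ^ 2 := by
    rw [Complex.normSq_apply, him]; ring
  have h0 : 0 ≤ (Q i i).re := by
    rw [hre]; exact Finset.sum_nonneg fun k _ => Complex.normSq_nonneg _
  refine ⟨him, h0, ?_⟩
  nlinarith [hge, hsq]

theorem trace_posPart_eq_sup_proj
    {n : Type*} [Fintype n] [DecidableEq n]
    (A : Matrix n n ℂ) (hA : A.IsHermitian) :
    (∀ P : Matrix n n ℂ, P.IsHermitian → P * P = P →
        (P * A).trace.re ≤ (matPosPart A).trace.re) ∧
      ∃ P : Matrix n n ℂ, P.IsHermitian ∧ P * P = P ∧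
        (P * A).trace.re = (matPosPart A).trace.re := by
  classical
  set V : Matrix n n ℂ := (hA.eigenvectorUnitary : Matrix n n ℂ) with hV
  have hVsV : star V * V = 1 := Unitary.coe_star_mul_self hA.eigenvectorUnitary
  have hVVs : V * star V = 1 := Unitary.coe_mul_star_self hA.eigenvectorUnitary
  set lam := hA.eigenvalues with hlam
  -- trace of B * A
  have htr : ∀ B : Matrix n n ℂ,
      (B * A).trace = ∑ i, (star V * B * V) i i * (lam i : ℂ) := by
    intro B
    conv_lhs => rw [hA.spectral_theorem]
    rw [Unitary.conjStarAlgAut_apply, ← hV, ← mul_assoc, ← mul_assoc, Matrix.trace_mul_comm, ← mul_assoc, ← mul_assoc]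
    simp [Matrix.trace, Matrix.diag, Matrix.mul_diagonal, Function.comp, hlam]
  -- trace of the positive part
  have hpos : (matPosPart A).trace.re = ∑ i, max (lam i) 0 := by
    rw [matPosPart, hA.cfc_eq, Matrix.IsHermitian.cfc, Unitary.conjStarAlgAut_apply, ← hV, trace_mul_cycle,
      hVsV, one_mul, trace_diagonal]
    simp [Complex.re_sum, Function.comp, hlam]
  constructor
  · intro P hP hP2
    set Q : Matrix n n ℂ := star V * P * V with hQdef
    have hQherm : Q.IsHermitian := by
      simp only [Matrix.IsHermitian, hQdef, conjTranspose_mul, conjTranspose_conjTranspose,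
        star_eq_conjTranspose, hP.eq, mul_assoc]
    have hQ2 : Q * Q = Q := by
      simp only [hQdef, mul_assoc]
      rw [show V * (star V * (P * V)) = (V * star V) * (P * V) from (mul_assoc _ _ _).symm, hVVs, one_mul,
        show P * (P * V) = (P * P) * V from (mul_assoc _ _ _).symm, hP2]
    rw [htr P, hpos, Complex.re_sum]
    refine Finset.sum_le_sum fun i _ => ?_
    obtain ⟨him, h0, h1⟩ := proj_diag_entry Q hQherm hQ2 i
    have : (Q i i * (lam i : ℂ)).re = (Q i i).re * lam i := by
      simp [Complex.mul_re, him]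
    rw [this]
    rcases le_or_gt 0 (lam i) with h | h
    · rw [max_eq_left h]; nlinarith
    · rw [max_eq_right h.le]; nlinarith
  · refine ⟨V * diagonal (fun i => if 0 ≤ lam i then (1 : ℂ) else 0) * star V, ?_, ?_, ?_⟩
    · simp only [Matrix.IsHermitian, conjTranspose_mul, conjTranspose_conjTranspose,
        diagonal_conjTranspose, star_eq_conjTranspose, mul_assoc]
      congr 2
      ext i
      simp [Pi.star_def]
    · rw [show ∀ X Y : Matrix n n ℂ, (V * X * star V) * (V * Y * star V)
          = V * (X * (star V * V) * Y) * star V from fun X Y => by noncomm_ring]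
      rw [hVsV, mul_one, diagonal_mul_diagonal]
      have : (fun i => (if 0 ≤ lam i then (1:ℂ) else 0) * if 0 ≤ lam i then (1:ℂ) else 0)
          = fun i => if 0 ≤ lam i then (1:ℂ) else 0 := by
        funext i; split <;> simp
      rw [this]
    · rw [htr, hpos]
      have : star V * (V * diagonal (fun i => if 0 ≤ lam i then (1 : ℂ) else 0) * star V) * V
          = diagonal (fun i => if 0 ≤ lam i then (1 : ℂ) else 0) := by
        rw [show star V * (V * diagonal (fun i => if 0 ≤ lam i then (1 : ℂ) else 0) * star V) * V
            = (star V * V) * diagonal (fun i => if 0 ≤ lam i then (1 : ℂ) else 0) * (star V * V)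
            from by noncomm_ring, hVsV, one_mul, mul_one]
      rw [this, Complex.re_sum]
      refine Finset.sum_congr rfl fun i _ => ?_
      rcases le_or_gt 0 (lam i) with h | h
      · simp [h, max_eq_left h]
      · simp [not_le.mpr h, max_eq_right h.le]
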